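/- Let ρ ≥ 0 be an integer and n ≥ 1 be a squarefree integer. Then 𝒥_ρ(n) ≤ η(n, ρ+1)^{ρ+1}. -/

import Mathlib

open Finset

/-- `𝒥_ρ(n) = ∑_{i=1}^{τ(n)} i^ρ / d_i`, where `d_1 < d_2 < ⋯ < d_{τ(n)}` is the increasing
sequence of the divisors of `n`. -/
noncomputable def Jfun (ρ : ℝ) (n : ℕ) : ℝ :=
  ∑ i ∈ Finset.range n.divisors.card,
    ((i : ℝ) + 1) ^ ρ / (((n.divisors.sort (· ≤ ·)).getD i 0 : ℕ) : ℝ)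

/-- `η(n,t) = ∏_{p ∣ n} (1 + p^{-1/t})`. -/
noncomputable def eta (n : ℕ) (t : ℝ) : ℝ :=
  ∏ p ∈ n.primeFactors, (1 + (p : ℝ) ^ (-(1/t)))


lemma sum_sort_getD (s : Finset ℕ) (g : ℕ → ℝ) :
    ∑ i ∈ Finset.range s.card, g ((s.sort (· ≤ ·)).getD i 0) = ∑ d ∈ s, g d := by
  classical
  set l := s.sort (· ≤ ·) with hl
  have hlen : l.length = s.card := Finset.length_sort _
  have hnd : l.Nodup := Finset.sort_nodup _ _
  refine Finset.sum_nbij' (i := fun i => l.getD i 0) (j := fun d => l.idxOf d)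
    ?_ ?_ ?_ ?_ ?_
  · intro i hi
    rw [Finset.mem_range] at hi
    have hi' : i < l.length := hlen ▸ hi
    beta_reduce; rw [List.getD_eq_getElem _ _ hi']
    exact (Finset.mem_sort _).1 (l.getElem_mem hi')
  · intro d hd
    rw [Finset.mem_range, ← hlen]
    exact List.idxOf_lt_length_iff.2 ((Finset.mem_sort _).2 hd)
  · intro i hi
    rw [Finset.mem_range] at hi
    have hi' : i < l.length := hlen ▸ hi
    beta_reduce; rw [List.getD_eq_getElem _ _ hi']
    exact List.Nodup.idxOf_getElem hnd i hi'
  · intro d hd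
    have hmem : d ∈ l := (Finset.mem_sort _).2 hd
    have h' : l.idxOf d < l.length := List.idxOf_lt_length_iff.2 hmem
    beta_reduce; rw [List.getD_eq_getElem _ _ h']
    exact List.getElem_idxOf h'
  · intro i hi
    rfl

lemma eta_eq_sum {n : ℕ} (hsf : Squarefree n) (t : ℝ) :
    eta n t = ∑ d ∈ n.divisors, (d : ℝ) ^ (-(1/t)) := by
  classical
  set f : ArithmeticFunction ℝ :=
    ⟨fun d => if d = 0 then 0 else (d : ℝ) ^ (-(1/t)), by simp⟩ with hf
  have hfapp : ∀ d : ℕ, d ≠ 0 → f d = (d : ℝ) ^ (-(1/t)) := by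
    intro d hd
    simp [hf, ArithmeticFunction.coe_mk, hd]
  have hmult : f.IsMultiplicative := by
    constructor
    · rw [hfapp 1 one_ne_zero]; simp [Real.one_rpow]
    · intro m k hmk
      rcases eq_or_ne m 0 with rfl | hm
      · have : k = 1 := Nat.coprime_zero_left k |>.1 hmk
        subst this; simp [hfapp 1 one_ne_zero]
      rcases eq_or_ne k 0 with rfl | hk
      · have : m = 1 := Nat.coprime_zero_right m |>.1 hmk
        subst this; simp [hfapp 1 one_ne_zero]
      rw [hfapp _ (Nat.mul_ne_zero hm hk), hfapp _ hm, hfapp _ hk,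
        Nat.cast_mul, Real.mul_rpow (Nat.cast_nonneg m) (Nat.cast_nonneg k)]
  have h := hmult.prodPrimeFactors_one_add_of_squarefree hsf
  rw [eta]
  calc ∏ p ∈ n.primeFactors, (1 + (p : ℝ) ^ (-(1/t)))
      = ∏ p ∈ n.primeFactors, (1 + f p) := by
        refine Finset.prod_congr rfl fun p hp => ?_
        rw [hfapp p (Nat.prime_of_mem_primeFactors hp).ne_zero]
    _ = ∑ d ∈ n.divisors, f d := h
    _ = ∑ d ∈ n.divisors, (d : ℝ) ^ (-(1/t)) := by
        refine Finset.sum_congr rfl fun d hd => ?_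
        rw [hfapp d (Nat.pos_of_mem_divisors hd).ne']

theorem stmt11 (ρ : ℕ) (n : ℕ) (hn : 1 ≤ n) (hsf : Squarefree n) :
    Jfun (ρ : ℝ) n ≤ eta n ((ρ : ℝ) + 1) ^ (ρ + 1) := by
  classical
  set t : ℝ := (ρ : ℝ) + 1 with htdef
  have ht : (0:ℝ) < t := by positivity
  set l := n.divisors.sort (· ≤ ·) with hldef
  have hlen : l.length = n.divisors.card := Finset.length_sort _
  have hnd : l.Nodup := Finset.sort_nodup _ _
  have hsort : l.Pairwise (· ≤ ·) := Finset.pairwise_sort _ _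
  set S : ℝ := ∑ d ∈ n.divisors, (d : ℝ) ^ (-(1/t)) with hSdef
  have hdpos : ∀ d ∈ n.divisors, (0:ℝ) < (d:ℝ) := fun d hd => by
    exact_mod_cast Nat.pos_of_mem_divisors hd
  have hS0 : 0 ≤ S := Finset.sum_nonneg fun d hd => Real.rpow_nonneg (Nat.cast_nonneg d) _
  -- the key pointwise inequality
  have key : ∀ i, i < n.divisors.card →
      ((i : ℝ) + 1) ≤ ((l.getD i 0 : ℕ) : ℝ) ^ (1/t) * S := by
    intro i hi
    have hi' : i < l.length := hlen ▸ hi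
    set D := l.getD i 0 with hD
    have hDmem : D ∈ n.divisors := by
      rw [hD, List.getD_eq_getElem _ _ hi']
      exact (Finset.mem_sort _).1 (l.getElem_mem hi')
    have hD0 : (0:ℝ) < (D:ℝ) := hdpos D hDmem
    have hcard : i + 1 ≤ (n.divisors.filter (fun d => d ≤ D)).card := by
      have hinj : Set.InjOn (fun j => l.getD j 0) (Finset.range (i+1)) := by
        intro j1 h1 j2 h2 he
        simp only [Finset.coe_range, Set.mem_Iio] at h1 h2
        have h1' : j1 < l.length := lt_of_lt_of_le h1 (Nat.succ_le_of_lt hi')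
        have h2' : j2 < l.length := lt_of_lt_of_le h2 (Nat.succ_le_of_lt hi')
        simp only [List.getD_eq_getElem _ _ h1', List.getD_eq_getElem _ _ h2'] at he
        exact (hnd.getElem_inj_iff).1 he
      have hmaps : ∀ j ∈ Finset.range (i+1),
          l.getD j 0 ∈ n.divisors.filter (fun d => d ≤ D) := by
        intro j hj
        rw [Finset.mem_range] at hj
        have hj' : j < l.length := lt_of_lt_of_le hj (Nat.succ_le_of_lt hi')
        rw [Finset.mem_filter]
        constructor
        · rw [List.getD_eq_getElem _ _ hj']
          exact (Finset.mem_sort _).1 (l.getElem_mem hj')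
        · rw [hD, List.getD_eq_getElem _ _ hj', List.getD_eq_getElem _ _ hi']
          exact hsort.rel_get_of_le (a := ⟨j, hj'⟩) (b := ⟨i, hi'⟩)
            (by exact Nat.lt_succ_iff.1 hj)
      have := Finset.card_le_card_of_injOn _ hmaps hinj
      simpa using this
    have h1 : ((i : ℝ) + 1) ≤ ((n.divisors.filter (fun d => d ≤ D)).card : ℝ) := by
      exact_mod_cast hcard
    have h3 : ((n.divisors.filter (fun d => d ≤ D)).card : ℝ)
        ≤ ∑ d ∈ n.divisors.filter (fun d => d ≤ D), (D:ℝ) ^ (1/t) * (d:ℝ) ^ (-(1/t)) := by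
      rw [Finset.card_eq_sum_ones, Nat.cast_sum]
      refine Finset.sum_le_sum fun d hd => ?_
      rw [Finset.mem_filter] at hd
      have hd0 : (0:ℝ) < (d:ℝ) := hdpos d hd.1
      have hdD : (d:ℝ) ≤ (D:ℝ) := by exact_mod_cast hd.2
      have : (D:ℝ) ^ (1/t) * (d:ℝ) ^ (-(1/t)) = ((D:ℝ)/(d:ℝ)) ^ (1/t) := by
        rw [Real.rpow_neg hd0.le, Real.div_rpow hD0.le hd0.le]
        ring
      rw [this, Nat.cast_one]
      apply Real.one_le_rpow
      · rw [le_div_iff₀ hd0]; simpa using hdD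
      · positivity
    have h4 : ∑ d ∈ n.divisors.filter (fun d => d ≤ D), (D:ℝ) ^ (1/t) * (d:ℝ) ^ (-(1/t))
        ≤ ∑ d ∈ n.divisors, (D:ℝ) ^ (1/t) * (d:ℝ) ^ (-(1/t)) := by
      refine Finset.sum_le_sum_of_subset_of_nonneg (Finset.filter_subset _ _) fun d hd _ => ?_
      have := hdpos d hd
      positivity
    calc ((i : ℝ) + 1) ≤ _ := h1
      _ ≤ _ := h3
      _ ≤ _ := h4
      _ = (D:ℝ) ^ (1/t) * S := by rw [hSdef, Finset.mul_sum]
  -- pointwise bound on terms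
  have hexp : (1/t) * (ρ:ℝ) - 1 = -(1/t) := by
    rw [htdef]; field_simp; ring
  have step : ∀ i ∈ Finset.range n.divisors.card,
      ((i : ℝ) + 1) ^ (ρ:ℝ) / ((l.getD i 0 : ℕ) : ℝ)
        ≤ S ^ ρ * ((l.getD i 0 : ℕ) : ℝ) ^ (-(1/t)) := by
    intro i hi
    rw [Finset.mem_range] at hi
    have hi' : i < l.length := hlen ▸ hi
    set D := l.getD i 0 with hD
    have hDmem : D ∈ n.divisors := by
      rw [hD, List.getD_eq_getElem _ _ hi']
      exact (Finset.mem_sort _).1 (l.getElem_mem hi')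
    have hD0 : (0:ℝ) < (D:ℝ) := hdpos D hDmem
    have hkey := key i hi
    have h2 : ((i : ℝ) + 1) ^ (ρ:ℝ) ≤ ((D:ℝ) ^ (1/t) * S) ^ ρ := by
      rw [Real.rpow_natCast]
      exact pow_le_pow_left₀ (by positivity) hkey ρ
    have h5 : ((D:ℝ) ^ (1/t) * S) ^ ρ / (D:ℝ) = S ^ ρ * (D:ℝ) ^ (-(1/t)) := by
      rw [mul_pow, ← Real.rpow_natCast ((D:ℝ) ^ (1/t)) ρ, ← Real.rpow_mul hD0.le]
      rw [mul_comm (((D:ℝ)) ^ ((1/t) * (ρ:ℝ))), mul_div_assoc]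
      congr 1
      rw [div_eq_mul_inv, ← Real.rpow_neg_one (D:ℝ), ← Real.rpow_add hD0]
      rw [show (1/t) * (ρ:ℝ) + (-1) = -(1/t) by linarith [hexp]]
    rw [← h5]
    exact div_le_div_of_nonneg_right h2 hD0.le
  -- put it together
  have hJ : Jfun (ρ : ℝ) n ≤ S ^ ρ * S := by
    rw [Jfun]
    calc ∑ i ∈ Finset.range n.divisors.card,
          ((i : ℝ) + 1) ^ (ρ:ℝ) / ((l.getD i 0 : ℕ) : ℝ)
        ≤ ∑ i ∈ Finset.range n.divisors.card,
          S ^ ρ * ((l.getD i 0 : ℕ) : ℝ) ^ (-(1/t)) := Finset.sum_le_sum step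
      _ = S ^ ρ * ∑ i ∈ Finset.range n.divisors.card,
          ((l.getD i 0 : ℕ) : ℝ) ^ (-(1/t)) := by rw [Finset.mul_sum]
      _ = S ^ ρ * S := by
          rw [hldef, sum_sort_getD n.divisors (fun d => (d:ℝ) ^ (-(1/t))), hSdef]
  calc Jfun (ρ : ℝ) n ≤ S ^ ρ * S := hJ
    _ = S ^ (ρ + 1) := (pow_succ S ρ).symm
    _ = eta n t ^ (ρ + 1) := by rw [eta_eq_sum hsf t, hSdef]
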